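/- Every coefficient of the power series expansion of (φ(q)² + φ(q³)²) / [(q³;q¹²)_∞ (q⁹;q¹²)_∞ (q¹²;q¹²)_∞] in q is strictly positive, where φ(q) = ∑_{n∈ℤ} q^{n²}. -/

import Mathlib

/-- The q-Pochhammer infinite product `(a; q)_∞ = ∏_{i≥0} (1 - a q^i)` (real). -/
noncomputable def qPochR (a q : ℝ) : ℝ := ∏' i : ℕ, (1 - a * q ^ i)

/-- Ramanujan's theta function `φ(q) = ∑_{n∈ℤ} q^{n²}` (real). -/
noncomputable def phiR (q : ℝ) : ℝ := ∑' n : ℤ, q ^ (n.natAbs ^ 2)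

open Finset Filter Topology

namespace CoefAux

/-- Cauchy convolution of coefficient sequences. -/
noncomputable def conv (f g : ℕ → ℝ) : ℕ → ℝ :=
  fun n => ∑ ij ∈ Finset.HasAntidiagonal.antidiagonal n, f ij.1 * g ij.2

/-- Coefficients of the geometric series `1/(1-q^s)`. -/
noncomputable def geomC (s : ℕ) : ℕ → ℝ := fun n => if s ∣ n then 1 else 0

noncomputable def deltaC : ℕ → ℝ := fun n => if n = 0 then 1 else 0

/-- Coefficients of finite products of geometric series. -/
noncomputable def F (e : ℕ → ℕ) : ℕ → ℕ → ℝ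
  | 0 => deltaC
  | N + 1 => conv (F e N) (geomC (e N))

/-- Limiting (partition) coefficients. -/
noncomputable def P (e : ℕ → ℕ) (n : ℕ) : ℝ := F e (n + 1) n

lemma conv_nonneg {f g : ℕ → ℝ} (hf : ∀ n, 0 ≤ f n) (hg : ∀ n, 0 ≤ g n) (n : ℕ) :
    0 ≤ conv f g n :=
  Finset.sum_nonneg fun ij _ => mul_nonneg (hf _) (hg _)

lemma geomC_nonneg (s n : ℕ) : 0 ≤ geomC s n := by
  unfold geomC; split <;> norm_num

lemma geomC_zero (s : ℕ) : geomC s 0 = 1 := by simp [geomC]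

lemma deltaC_nonneg (n : ℕ) : 0 ≤ deltaC n := by unfold deltaC; split <;> norm_num

lemma F_nonneg (e : ℕ → ℕ) (N n : ℕ) : 0 ≤ F e N n := by
  induction N generalizing n with
  | zero => exact deltaC_nonneg n
  | succ N ih => exact conv_nonneg ih (geomC_nonneg _) n

lemma mul_le_conv {f g : ℕ → ℝ} (hf : ∀ n, 0 ≤ f n) (hg : ∀ n, 0 ≤ g n)
    {i j n : ℕ} (hij : i + j = n) : f i * g j ≤ conv f g n := by
  have hmem : (i, j) ∈ Finset.HasAntidiagonal.antidiagonal n := by simpa using hij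
  exact Finset.single_le_sum (f := fun ij : ℕ × ℕ => f ij.1 * g ij.2)
    (fun ij _ => mul_nonneg (hf _) (hg _)) hmem

lemma conv_geomC_of_lt {f : ℕ → ℝ} {s n : ℕ} (hn : n < s) :
    conv f (geomC s) n = f n := by
  unfold conv
  rw [Finset.sum_eq_single_of_mem (n, 0) (by simp)]
  · simp [geomC]
  · rintro ⟨i, j⟩ hmem hne
    simp only [Finset.HasAntidiagonal.mem_antidiagonal] at hmem
    have hj : j ≠ 0 := by
      rintro rfl; exact hne (by simp [← hmem])
    have : ¬ s ∣ j := by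
      intro hdvd
      have := Nat.le_of_dvd (Nat.pos_of_ne_zero hj) hdvd
      omega
    simp [geomC, this]

lemma conv_deltaC (g : ℕ → ℝ) (n : ℕ) : conv deltaC g n = g n := by
  unfold conv
  rw [Finset.sum_eq_single_of_mem (0, n) (by simp)]
  · simp [deltaC]
  · rintro ⟨i, j⟩ hmem hne
    simp only [Finset.HasAntidiagonal.mem_antidiagonal] at hmem
    have : i ≠ 0 := by rintro rfl; exact hne (by simp [← hmem])
    simp [deltaC, this]

lemma F_mono (e : ℕ → ℕ) {M N : ℕ} (h : M ≤ N) (n : ℕ) : F e M n ≤ F e N n := by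
  induction N with
  | zero => simp only [Nat.le_zero] at h; simp [h]
  | succ N ih =>
    rcases Nat.lt_or_ge M (N + 1) with hlt | hge
    · refine le_trans (ih (by omega)) ?_
      have : F e N n * geomC (e N) 0 ≤ conv (F e N) (geomC (e N)) n :=
        mul_le_conv (F_nonneg e N) (geomC_nonneg _) (by omega)
      simpa [F, geomC_zero] using this
    · have : M = N + 1 := by omega
      simp [this]

lemma F_stab (e : ℕ → ℕ) (he : ∀ i, i < e i) {n N : ℕ} (h : n + 1 ≤ N) :
    F e N n = P e n := by
  induction N with
  | zero => omega
  | succ N ih =>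
    rcases Nat.lt_or_ge n N with hlt | hge
    · have : F e (N + 1) n = F e N n := by
        have hs : n < e N := lt_trans hlt (he N)
        simpa [F] using conv_geomC_of_lt (f := F e N) hs
      rw [this, ih (by omega)]
    · have : n + 1 = N + 1 := by omega
      rw [← this]; rfl

lemma P_nonneg (e : ℕ → ℕ) (n : ℕ) : 0 ≤ P e n := F_nonneg e _ n

lemma F_le_P (e : ℕ → ℕ) (he : ∀ i, i < e i) (M n : ℕ) : F e M n ≤ P e n := by
  rcases Nat.lt_or_ge M (n + 1) with h | h
  · exact le_of_le_of_eq (F_mono e (le_of_lt h) n) rfl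
  · exact le_of_eq (F_stab e he h)

/-- `f` is the coefficient sequence of an absolutely convergent power series at `q`
with value `v`. -/
def Rep (f : ℕ → ℝ) (q v : ℝ) : Prop :=
  Summable (fun n => ‖f n * q ^ n‖) ∧ ∑' n, f n * q ^ n = v

lemma Rep.summable {f : ℕ → ℝ} {q v : ℝ} (h : Rep f q v) :
    Summable (fun n => f n * q ^ n) := h.1.of_norm

lemma Rep.add {f g : ℕ → ℝ} {q v w : ℝ} (hf : Rep f q v) (hg : Rep g q w) :
    Rep (fun n => f n + g n) q (v + w) := by
  constructor
  · refine Summable.of_nonneg_of_le (fun n => norm_nonneg _) ?_ (hf.1.add hg.1)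
    intro n
    calc ‖(f n + g n) * q ^ n‖ = ‖f n * q ^ n + g n * q ^ n‖ := by ring_nf
      _ ≤ _ := norm_add_le _ _
  · have h := Summable.tsum_add hf.summable hg.summable
    rw [hf.2, hg.2] at h
    rw [← h]
    congr 1; ext n; ring

lemma Rep.mul {f g : ℕ → ℝ} {q v w : ℝ} (hf : Rep f q v) (hg : Rep g q w) :
    Rep (conv f g) q (v * w) := by
  have key : ∀ n, ∑ ij ∈ Finset.HasAntidiagonal.antidiagonal n, (f ij.1 * q ^ ij.1) * (g ij.2 * q ^ ij.2)
      = conv f g n * q ^ n := by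
    intro n
    unfold conv
    rw [Finset.sum_mul]
    refine Finset.sum_congr rfl ?_
    rintro ⟨i, j⟩ hmem
    simp only [Finset.HasAntidiagonal.mem_antidiagonal] at hmem
    rw [← hmem, pow_add]; ring
  constructor
  · have := summable_norm_sum_mul_antidiagonal_of_summable_norm hf.1 hg.1
    apply this.congr
    intro n
    rw [key n]
  · rw [← hf.2, ← hg.2, tsum_mul_tsum_eq_tsum_sum_antidiagonal_of_summable_norm hf.1 hg.1]
    exact tsum_congr fun n => (key n).symm

lemma Rep.delta (q : ℝ) : Rep deltaC q 1 := by
  have hfun : ∀ n : ℕ, deltaC n * q ^ n = if n = 0 then 1 else 0 := by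
    intro n
    cases n with
    | zero => simp [CoefAux.deltaC]
    | succ m => simp [CoefAux.deltaC]
  constructor
  · apply summable_of_ne_finset_zero (s := {0})
    intro n hn
    simp only [Finset.mem_singleton] at hn
    simp [hfun n, hn]
  · rw [tsum_eq_single 0]
    · simp [CoefAux.deltaC]
    · intro n hn; simp [hfun n, hn]

lemma Rep.geom {s : ℕ} (hs : 1 ≤ s) {q : ℝ} (hq : |q| < 1) :
    Rep (geomC s) q (1 - q ^ s)⁻¹ := by
  have habs : ∀ n : ℕ, ‖geomC s n * q ^ n‖ ≤ |q| ^ n := by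
    intro n
    rw [norm_mul, norm_pow, Real.norm_eq_abs, Real.norm_eq_abs]
    have : |CoefAux.geomC s n| ≤ 1 := by
      unfold CoefAux.geomC; split <;> norm_num
    calc |CoefAux.geomC s n| * |q| ^ n ≤ 1 * |q| ^ n := by
          apply mul_le_mul_of_nonneg_right this (by positivity)
      _ = |q| ^ n := one_mul _
  have hqs : ‖q ^ s‖ < 1 := by
    rw [norm_pow, Real.norm_eq_abs]
    calc |q| ^ s ≤ |q| ^ 1 := pow_le_pow_of_le_one (abs_nonneg q) (le_of_lt hq) hs
      _ = |q| := pow_one _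
      _ < 1 := hq
  constructor
  · exact Summable.of_nonneg_of_le (fun n => norm_nonneg _) habs
      (summable_geometric_of_lt_one (abs_nonneg q) hq)
  · have hinj : Function.Injective (fun k : ℕ => s * k) := fun a b h => by
      simp only at h
      exact Nat.eq_of_mul_eq_mul_left (by omega) h
    have hsupp : Function.support (fun n => CoefAux.geomC s n * q ^ n) ⊆
        Set.range (fun k : ℕ => s * k) := by
      intro n hn
      simp only [Function.mem_support] at hn
      have : s ∣ n := by
        by_contra hdvd
        simp [CoefAux.geomC, hdvd] at hn
      obtain ⟨k, rfl⟩ := this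
      exact ⟨k, rfl⟩
    rw [← Function.Injective.tsum_eq hinj hsupp]
    have : ∀ k : ℕ, CoefAux.geomC s (s * k) * q ^ (s * k) = (q ^ s) ^ k := by
      intro k
      rw [pow_mul]
      simp [CoefAux.geomC, Dvd.intro k rfl]
    rw [tsum_congr this, tsum_geometric_of_norm_lt_one hqs]

section part3
variable {e : ℕ → ℕ} {q : ℝ}


lemma Rep.F_rep (he : ∀ i, i < e i) (hq : |q| < 1) (N : ℕ) :
    Rep (F e N) q (∏ i ∈ Finset.range N, (1 - q ^ e i)⁻¹) := by
  induction N with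
  | zero => simpa [F] using Rep.delta q
  | succ N ih =>
    rw [Finset.prod_range_succ]
    exact ih.mul (Rep.geom (by have := he N; omega) hq)

lemma aux_sum_pow_le {x : ℝ} (hx0 : 0 ≤ x) (hx1 : x < 1) (M : ℕ) :
    ∑ i ∈ Finset.range M, x ^ (i + 1) ≤ (1 - x)⁻¹ := by
  have hsum : Summable (fun i : ℕ => x ^ i) := summable_geometric_of_lt_one hx0 hx1
  calc ∑ i ∈ Finset.range M, x ^ (i+1) ≤ ∑ i ∈ Finset.range M, x ^ i :=
        Finset.sum_le_sum (fun i _ => pow_le_pow_of_le_one hx0 hx1.le (by omega))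
    _ ≤ ∑' i : ℕ, x ^ i := Summable.sum_le_tsum _ (fun i _ => by positivity) hsum
    _ = (1 - x)⁻¹ := tsum_geometric_of_lt_one hx0 hx1

lemma prod_inv_le {x : ℝ} (hx0 : 0 ≤ x) (hx1 : x < 1) (he : ∀ i, i < e i) (M : ℕ) :
    ∏ i ∈ Finset.range M, (1 - x ^ e i)⁻¹ ≤ Real.exp ((1 - x)⁻¹ * (1 - x)⁻¹) := by
  have h1x : 0 < 1 - x := by linarith
  have hpos : ∀ i, 0 < 1 - x ^ e i := by
    intro i
    have h1e : 1 ≤ e i := by have := he i; omega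
    have : x ^ e i ≤ x := by
      calc x ^ e i ≤ x ^ 1 := pow_le_pow_of_le_one hx0 hx1.le h1e
        _ = x := pow_one x
    linarith
  have hfac : ∀ i, (1 - x ^ e i)⁻¹ ≤ Real.exp (x ^ (i + 1) * (1 - x)⁻¹) := by
    intro i
    have h1e : 1 ≤ e i := by have := he i; omega
    have htx : x ^ e i ≤ x := by
      calc x ^ e i ≤ x ^ 1 := pow_le_pow_of_le_one hx0 hx1.le h1e
        _ = x := pow_one x
    have ht1 : 0 < 1 - x ^ e i := by linarith
    have hti : x ^ e i ≤ x ^ (i + 1) :=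
      pow_le_pow_of_le_one hx0 hx1.le (by have := he i; omega)
    have key : (1 - x ^ e i)⁻¹ = 1 + x ^ e i / (1 - x ^ e i) := by
      field_simp; ring
    rw [key]
    have hdiv : x ^ e i / (1 - x ^ e i) ≤ x ^ (i + 1) * (1 - x)⁻¹ := by
      rw [div_eq_mul_inv]
      apply mul_le_mul hti ?_ (by positivity) (by positivity)
      apply inv_anti₀ h1x (by linarith)
    calc 1 + x ^ e i / (1 - x ^ e i) ≤ 1 + x ^ (i + 1) * (1 - x)⁻¹ := by linarith
      _ ≤ Real.exp (x ^ (i + 1) * (1 - x)⁻¹) := by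
          have := Real.add_one_le_exp (x ^ (i + 1) * (1 - x)⁻¹)
          linarith
  calc ∏ i ∈ Finset.range M, (1 - x ^ e i)⁻¹
      ≤ ∏ i ∈ Finset.range M, Real.exp (x ^ (i + 1) * (1 - x)⁻¹) := by
        apply Finset.prod_le_prod (fun i _ => le_of_lt (inv_pos.mpr (hpos i))) (fun i _ => hfac i)
    _ = Real.exp (∑ i ∈ Finset.range M, x ^ (i + 1) * (1 - x)⁻¹) := by
        rw [← Real.exp_sum]
    _ ≤ Real.exp ((1 - x)⁻¹ * (1 - x)⁻¹) := by
        apply Real.exp_le_exp.mpr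
        rw [← Finset.sum_mul]
        apply mul_le_mul_of_nonneg_right (aux_sum_pow_le hx0 hx1 M) (by positivity)

lemma P_abs_summable (he : ∀ i, i < e i) (hq : |q| < 1) :
    Summable (fun n => ‖P e n * q ^ n‖) := by
  have hx0 : (0:ℝ) ≤ |q| := abs_nonneg q
  have hxx : |(|q|)| < 1 := by rwa [abs_abs]
  have hterm : ∀ n, ‖P e n * q ^ n‖ = P e n * |q| ^ n := by
    intro n
    rw [norm_mul, Real.norm_eq_abs, Real.norm_eq_abs,
      abs_of_nonneg (P_nonneg e n), abs_pow]
  apply summable_of_sum_range_le (c := Real.exp ((1 - |q|)⁻¹ * (1 - |q|)⁻¹))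
    (fun n => norm_nonneg _)
  intro M
  have hF := Rep.F_rep (q := |q|) he hxx M
  calc ∑ n ∈ Finset.range M, ‖P e n * q ^ n‖
      = ∑ n ∈ Finset.range M, F e M n * |q| ^ n := by
        refine Finset.sum_congr rfl fun n hn => ?_
        rw [hterm, F_stab e he (by simp only [Finset.mem_range] at hn; omega)]
    _ ≤ ∑' n, F e M n * |q| ^ n := Summable.sum_le_tsum _
        (fun n _ => by have := F_nonneg e M n; positivity) hF.summable
    _ = ∏ i ∈ Finset.range M, (1 - |q| ^ e i)⁻¹ := hF.2
    _ ≤ Real.exp ((1 - |q|)⁻¹ * (1 - |q|)⁻¹) := prod_inv_le hx0 hq he M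

lemma one_sub_pow_pos (he : ∀ i, i < e i) (hq : |q| < 1) (i : ℕ) :
    0 < 1 - q ^ e i := by
  have h1e : 1 ≤ e i := by have := he i; omega
  have : |q ^ e i| ≤ |q| := by
    rw [abs_pow]
    calc |q| ^ e i ≤ |q| ^ 1 := pow_le_pow_of_le_one (abs_nonneg q) hq.le h1e
      _ = |q| := pow_one _
  have := le_abs_self (q ^ e i)
  linarith

lemma log_summable (he : ∀ i, i < e i) (hq : |q| < 1) :
    Summable (fun i => Real.log (1 - q ^ e i)) := by
  have hgeo : Summable (fun i : ℕ => (1 + (1 - |q|)⁻¹) * |q| ^ (i + 1)) := by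
    apply Summable.mul_left
    apply ((summable_geometric_of_lt_one (abs_nonneg q) hq).mul_right |q|).congr
    intro i
    rw [pow_succ]
  apply Summable.of_norm_bounded hgeo
  intro i
  have h1e : 1 ≤ e i := by have := he i; omega
  have hy : |q ^ e i| ≤ |q| ^ (i + 1) := by
    rw [abs_pow]
    exact pow_le_pow_of_le_one (abs_nonneg q) hq.le (by have := he i; omega)
  have hyq : |q ^ e i| ≤ |q| := by
    rw [abs_pow]
    calc |q| ^ e i ≤ |q| ^ 1 := pow_le_pow_of_le_one (abs_nonneg q) hq.le h1e
      _ = |q| := pow_one _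
  have hy1 : |q ^ e i| < 1 := lt_of_le_of_lt hyq hq
  have hkey := Real.abs_log_sub_add_sum_range_le hy1 1
  simp only [Finset.range_one, Finset.sum_singleton] at hkey
  norm_num at hkey
  simp only [← abs_pow] at hkey
  rw [abs_pow (q ^ e i)] at hkey
  have h1x : (0:ℝ) < 1 - |q| := by linarith
  have hsq : |q ^ e i| ^ 2 / (1 - |q ^ e i|) ≤ |q ^ e i| * (1 - |q|)⁻¹ := by
    rw [div_eq_mul_inv, sq]
    apply mul_le_mul
    · calc |q ^ e i| * |q ^ e i| ≤ 1 * |q ^ e i| := by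
            apply mul_le_mul_of_nonneg_right hy1.le (abs_nonneg _)
        _ = |q ^ e i| := one_mul _
    · apply inv_anti₀ h1x (by linarith)
    · have h0 : (0:ℝ) ≤ 1 - |q ^ e i| := by linarith
      positivity
    · exact abs_nonneg _
  rw [Real.norm_eq_abs]
  have htri : |Real.log (1 - q ^ e i)| ≤ |q ^ e i| + |q ^ e i| ^ 2 / (1 - |q ^ e i|) := by
    have h2 : |Real.log (1 - q ^ e i)| ≤ |q ^ e i + Real.log (1 - q ^ e i)| + |q ^ e i| := by
      have h3 := abs_sub (q ^ e i + Real.log (1 - q ^ e i)) (q ^ e i)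
      simpa using h3
    linarith [hkey]
  calc |Real.log (1 - q ^ e i)| ≤ |q ^ e i| + |q ^ e i| * (1 - |q|)⁻¹ := le_trans htri (by linarith)
    _ = |q ^ e i| * (1 + (1 - |q|)⁻¹) := by ring
    _ ≤ |q| ^ (i+1) * (1 + (1 - |q|)⁻¹) := by
        apply mul_le_mul_of_nonneg_right hy (by positivity)
    _ = (1 + (1 - |q|)⁻¹) * |q| ^ (i+1) := by ring

lemma tendsto_prod (he : ∀ i, i < e i) (hq : |q| < 1) :
    Tendsto (fun M => ∏ i ∈ Finset.range M, (1 - q ^ e i)) atTop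
      (𝓝 (∏' i, (1 - q ^ e i))) := by
  have hp : HasProd (fun i => 1 - q ^ e i) (∏' i, (1 - q ^ e i)) := by
    exact (Real.multipliable_of_summable_log (fun i => one_sub_pow_pos he hq i)
      (log_summable he hq)).hasProd
  exact hp.tendsto_prod_nat

lemma Rep_P (he : ∀ i, i < e i) (hq : |q| < 1) :
    (∏' i, (1 - q ^ e i)) ≠ 0 ∧ Rep (P e) q (∏' i, (1 - q ^ e i))⁻¹ := by
  have hsum := P_abs_summable he hq
  have hGne : ∀ M, (∏ i ∈ Finset.range M, (1 - q ^ e i)) ≠ 0 := by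
    intro M
    exact Finset.prod_ne_zero_iff.mpr fun i _ => ne_of_gt (one_sub_pow_pos he hq i)
  have hGS : ∀ M, (∏ i ∈ Finset.range M, (1 - q ^ e i)) * (∑' n, F e M n * q ^ n) = 1 := by
    intro M
    rw [(Rep.F_rep he hq M).2, ← Finset.prod_mul_distrib]
    apply Finset.prod_eq_one
    intro i _
    exact mul_inv_cancel₀ (ne_of_gt (one_sub_pow_pos he hq i))
  have hS : Tendsto (fun M => ∑' n, F e M n * q ^ n) atTop (𝓝 (∑' n, P e n * q ^ n)) := by
    apply tendsto_tsum_of_dominated_convergence (bound := fun n => ‖P e n * q ^ n‖) hsum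
    · intro n
      apply Tendsto.congr' ?_ (tendsto_const_nhds (x := P e n * q ^ n))
      filter_upwards [eventually_ge_atTop (n + 1)] with M hM
      rw [F_stab e he hM]
    · filter_upwards with M n
      rw [norm_mul, norm_mul]
      apply mul_le_mul_of_nonneg_right ?_ (norm_nonneg _)
      rw [Real.norm_eq_abs, Real.norm_eq_abs, abs_of_nonneg (F_nonneg e M n),
        abs_of_nonneg (P_nonneg e n)]
      exact F_le_P e he M n
  have hlim : (∏' i, (1 - q ^ e i)) * (∑' n, P e n * q ^ n) = 1 :=
    tendsto_nhds_unique ((tendsto_prod he hq).mul hS)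
      (Tendsto.congr (fun M => (hGS M).symm) tendsto_const_nhds)
  refine ⟨?_, hsum, ?_⟩
  · intro h0
    rw [h0, zero_mul] at hlim
    norm_num at hlim
  · rw [mul_comm] at hlim
    exact eq_inv_of_mul_eq_one_left hlim

end part3

/-! ### Theta function coefficients -/

noncomputable def uC : ℕ → ℝ := fun n => if Nat.sqrt n * Nat.sqrt n = n then 1 else 0
noncomputable def vC : ℕ → ℝ := fun n => if n ≠ 0 ∧ Nat.sqrt n * Nat.sqrt n = n then 1 else 0
noncomputable def tC : ℕ → ℝ := fun n => uC n + vC n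
noncomputable def dil3 (f : ℕ → ℝ) : ℕ → ℝ := fun n => if 3 ∣ n then f (n / 3) else 0

lemma uC_nonneg (n : ℕ) : 0 ≤ uC n := by unfold uC; split <;> norm_num
lemma vC_nonneg (n : ℕ) : 0 ≤ vC n := by unfold vC; split <;> norm_num
lemma tC_nonneg (n : ℕ) : 0 ≤ tC n := add_nonneg (uC_nonneg n) (vC_nonneg n)
lemma dil3_nonneg {f : ℕ → ℝ} (hf : ∀ n, 0 ≤ f n) (n : ℕ) : 0 ≤ dil3 f n := by
  unfold dil3; split
  · exact hf _
  · exact le_refl 0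
lemma summable_indicator_pow {w : ℕ → ℝ} {q : ℝ} (hq : |q| < 1)
    (hw : ∀ n, |w n| ≤ 2) : Summable (fun n => ‖w n * q ^ n‖) := by
  refine Summable.of_nonneg_of_le (fun n => norm_nonneg _) ?_
    ((summable_geometric_of_lt_one (abs_nonneg q) hq).mul_left 2)
  intro n
  rw [norm_mul, Real.norm_eq_abs, Real.norm_eq_abs, abs_pow]
  exact mul_le_mul_of_nonneg_right (hw n) (by positivity)

lemma summable_pow_exp {q : ℝ} (hq : |q| < 1) (g : ℕ → ℕ) (hg : ∀ m, m ≤ g m) :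
    Summable (fun m : ℕ => ‖q ^ g m‖) := by
  refine Summable.of_nonneg_of_le (fun n => norm_nonneg _) ?_
    (summable_geometric_of_lt_one (abs_nonneg q) hq)
  intro m
  rw [norm_pow, Real.norm_eq_abs]
  exact pow_le_pow_of_le_one (abs_nonneg q) hq.le (hg m)

lemma Rep.u {q : ℝ} (hq : |q| < 1) : Rep uC q (∑' m : ℕ, q ^ (m * m)) := by
  constructor
  · exact summable_indicator_pow hq (fun n => by unfold uC; split <;> norm_num)
  · have hinj : Function.Injective (fun m : ℕ => m * m) := by
      intro a b h
      simpa [Nat.mul_self_inj] using h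
    have hsupp : Function.support (fun n => uC n * q ^ n) ⊆
        Set.range (fun m : ℕ => m * m) := by
      intro n hn
      simp only [Function.mem_support] at hn
      have : Nat.sqrt n * Nat.sqrt n = n := by
        by_contra hc
        simp [uC, hc] at hn
      exact ⟨Nat.sqrt n, this⟩
    rw [← Function.Injective.tsum_eq hinj hsupp]
    apply tsum_congr
    intro m
    have h1 : uC (m * m) = 1 := by
      unfold uC
      rw [Nat.sqrt_eq]
      simp
    simp only [h1, one_mul]

lemma Rep.v {q : ℝ} (hq : |q| < 1) : Rep vC q (∑' m : ℕ, q ^ ((m + 1) * (m + 1))) := by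
  constructor
  · exact summable_indicator_pow hq (fun n => by unfold vC; split <;> norm_num)
  · have hinj : Function.Injective (fun m : ℕ => (m + 1) * (m + 1)) := by
      intro a b h
      simp only [Nat.mul_self_inj] at h
      omega
    have hsupp : Function.support (fun n => vC n * q ^ n) ⊆
        Set.range (fun m : ℕ => (m + 1) * (m + 1)) := by
      intro n hn
      simp only [Function.mem_support] at hn
      have hsq : n ≠ 0 ∧ Nat.sqrt n * Nat.sqrt n = n := by
        by_contra hc
        simp [vC, hc] at hn
      obtain ⟨hn0, hs⟩ := hsq
      have hpos : 1 ≤ Nat.sqrt n := by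
        rcases Nat.eq_zero_or_pos (Nat.sqrt n) with h0 | h1
        · rw [h0] at hs; omega
        · exact h1
      refine ⟨Nat.sqrt n - 1, ?_⟩
      show (Nat.sqrt n - 1 + 1) * (Nat.sqrt n - 1 + 1) = n
      rw [Nat.sub_add_cancel hpos, hs]
    rw [← Function.Injective.tsum_eq hinj hsupp]
    apply tsum_congr
    intro m
    have h1 : vC ((m + 1) * (m + 1)) = 1 := by
      unfold vC
      rw [Nat.sqrt_eq]
      simp
    rw [h1, one_mul]

lemma Rep.t {q : ℝ} (hq : |q| < 1) : Rep tC q (phiR q) := by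
  have hu := Rep.u hq
  have hv := Rep.v hq
  have h := hu.add hv
  have key1 : ∀ m : ℕ, q ^ (((m : ℤ)).natAbs ^ 2) = q ^ (m * m) := by
    intro m
    rw [Int.natAbs_natCast, pow_two]
  have key2 : ∀ m : ℕ, q ^ ((-((m : ℤ) + 1)).natAbs ^ 2) = q ^ ((m + 1) * (m + 1)) := by
    intro m
    have hna : (-((m : ℤ) + 1)).natAbs = m + 1 := by omega
    rw [hna, pow_two]
  have hs1 : Summable (fun m : ℕ => q ^ (((m : ℤ)).natAbs ^ 2)) := by
    apply Summable.of_norm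
    apply summable_pow_exp hq
    intro m
    rw [Int.natAbs_natCast]
    nlinarith
  have hs2 : Summable (fun m : ℕ => q ^ ((-((m : ℤ) + 1)).natAbs ^ 2)) := by
    apply Summable.of_norm
    apply summable_pow_exp hq
    intro m
    have hna : (-((m : ℤ) + 1)).natAbs = m + 1 := by omega
    rw [hna]
    calc m ≤ m + 1 := by omega
      _ ≤ (m + 1) ^ 2 := by nlinarith
  have hphi : phiR q = (∑' m : ℕ, q ^ (m * m)) + ∑' m : ℕ, q ^ ((m + 1) * (m + 1)) := by
    unfold phiR
    rw [tsum_of_nat_of_neg_add_one (f := fun n : ℤ => q ^ (n.natAbs ^ 2)) hs1 hs2]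
    congr 1
    · exact tsum_congr key1
    · exact tsum_congr key2
  rw [hphi]
  exact h

lemma Rep.dilate {f : ℕ → ℝ} {q v : ℝ} (h : Rep f (q ^ 3) v) : Rep (CoefAux.dil3 f) q v := by
  have hinj : Function.Injective (fun k : ℕ => 3 * k) := fun a b hab => by simp only at hab; omega
  have hcomp : ∀ k : ℕ, dil3 f (3 * k) * q ^ (3 * k) = f k * (q ^ 3) ^ k := by
    intro k
    have h3 : (3 : ℕ) ∣ 3 * k := ⟨k, rfl⟩
    simp only [CoefAux.dil3, h3, if_true, Nat.mul_div_cancel_left k (by norm_num : 0 < 3)]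
    rw [pow_mul]
  have hsupp : Function.support (fun n => dil3 f n * q ^ n) ⊆
      Set.range (fun k : ℕ => 3 * k) := by
    intro n hn
    simp only [Function.mem_support] at hn
    have : (3 : ℕ) ∣ n := by
      by_contra hc
      simp [CoefAux.dil3, hc] at hn
    obtain ⟨k, rfl⟩ := this
    exact ⟨k, rfl⟩
  constructor
  · rw [← Function.Injective.summable_iff hinj]
    · apply h.1.congr
      intro k
      simp only [Function.comp_apply]
      rw [hcomp k]
    · intro n hn
      by_contra hc
      exact hn (hsupp (by simpa [Function.mem_support] using hc))
  · rw [← Function.Injective.tsum_eq hinj hsupp, ← h.2]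
    exact tsum_congr hcomp

noncomputable def numC : ℕ → ℝ := fun n => conv tC tC n + dil3 (conv tC tC) n

lemma Rep.num {q : ℝ} (hq : |q| < 1) :
    Rep numC q (phiR q ^ 2 + phiR (q ^ 3) ^ 2) := by
  have hq3 : |q ^ 3| < 1 := by
    rw [abs_pow]
    calc |q| ^ 3 ≤ |q| ^ 1 := pow_le_pow_of_le_one (abs_nonneg q) hq.le (by omega)
      _ = |q| := pow_one _
      _ < 1 := hq
  have h1 : Rep (conv tC tC) q (phiR q * phiR q) := (Rep.t hq).mul (Rep.t hq)
  have h2 : Rep (conv tC tC) (q ^ 3) (phiR (q ^ 3) * phiR (q ^ 3)) :=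
    (Rep.t hq3).mul (Rep.t hq3)
  have h3 := Rep.dilate h2
  have h := h1.add h3
  rw [pow_two, pow_two]
  exact h

/-! ### Small coefficient values -/

lemma conv_eval (f g : ℕ → ℝ) (n : ℕ) :
    conv f g n = ∑ k ∈ Finset.range (n + 1), f k * g (n - k) :=
  Finset.Nat.sum_antidiagonal_eq_sum_range_succ_mk _ n

lemma tC_zero : tC 0 = 1 := by norm_num [tC, uC, vC]
lemma tC_one : tC 1 = 2 := by norm_num [tC, uC, vC]
lemma tC_two : tC 2 = 0 := by
  have h : Nat.sqrt 2 = 1 := by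
    have h1 : 1 ≤ Nat.sqrt 2 := Nat.le_sqrt.mpr (by norm_num)
    have h2 : Nat.sqrt 2 < 2 := Nat.sqrt_lt_self (by norm_num)
    omega
  norm_num [tC, uC, vC, h]

lemma convtt_zero : conv tC tC 0 = 1 := by
  rw [conv_eval]; simp [tC_zero]
lemma convtt_one : conv tC tC 1 = 4 := by
  rw [conv_eval]
  simp [Finset.sum_range_succ, tC_zero, tC_one]
  norm_num
lemma convtt_two : conv tC tC 2 = 4 := by
  rw [conv_eval]
  simp [Finset.sum_range_succ, tC_zero, tC_one, tC_two]
  norm_num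

lemma numC_zero : numC 0 = 2 := by
  have : dil3 (conv tC tC) 0 = 1 := by
    simp [dil3, convtt_zero]
  simp [numC, convtt_zero, this]
  norm_num
lemma numC_one : numC 1 = 4 := by
  have : dil3 (conv tC tC) 1 = 0 := by
    norm_num [dil3]
  simp [numC, convtt_one, this]
lemma numC_two : numC 2 = 4 := by
  have : dil3 (conv tC tC) 2 = 0 := by
    norm_num [dil3]
  simp [numC, convtt_two, this]

lemma numC_nonneg (n : ℕ) : 0 ≤ numC n :=
  add_nonneg (conv_nonneg tC_nonneg tC_nonneg n)
    (dil3_nonneg (conv_nonneg tC_nonneg tC_nonneg) n)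

/-! ### Final coefficients -/

noncomputable def eA : ℕ → ℕ := fun i => 3 + 12 * i
noncomputable def eB : ℕ → ℕ := fun i => 9 + 12 * i
noncomputable def eC : ℕ → ℕ := fun i => 12 + 12 * i

lemma heA : ∀ i, i < eA i := fun i => by unfold eA; omega
lemma heB : ∀ i, i < eB i := fun i => by unfold eB; omega
lemma heC : ∀ i, i < eC i := fun i => by unfold eC; omega

noncomputable def cFinal : ℕ → ℝ :=
  conv (conv (conv numC (P eA)) (P eB)) (P eC)

lemma P_zero (e : ℕ → ℕ) : P e 0 = 1 := by
  show F e 1 0 = 1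
  show conv (F e 0) (geomC (e 0)) 0 = 1
  show conv deltaC (geomC (e 0)) 0 = 1
  rw [conv_deltaC, geomC_zero]

lemma PA_mul3 (k : ℕ) : 1 ≤ P eA (3 * k) := by
  have h1 : F eA 1 (3 * k) ≤ F eA (3 * k + 1) (3 * k) := F_mono eA (by omega) _
  have h2 : F eA 1 (3 * k) = 1 := by
    show conv (F eA 0) (geomC (eA 0)) (3 * k) = 1
    show conv deltaC (geomC (eA 0)) (3 * k) = 1
    rw [conv_deltaC]
    have : eA 0 = 3 := by norm_num [eA]
    rw [this]
    simp [geomC, Dvd.intro k rfl]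
  calc (1:ℝ) = F eA 1 (3 * k) := h2.symm
    _ ≤ F eA (3 * k + 1) (3 * k) := h1
    _ = P eA (3 * k) := rfl

lemma cFinal_pos (n : ℕ) : 0 < cFinal n := by
  have hconv1 : 0 < conv numC (P eA) n := by
    have hr : n % 3 + 3 * (n / 3) = n := by omega
    have hnum : (2:ℝ) ≤ numC (n % 3) := by
      have h3 : n % 3 < 3 := Nat.mod_lt n (by norm_num)
      interval_cases h : n % 3
      · rw [numC_zero]
      · rw [numC_one]; norm_num
      · rw [numC_two]; norm_num
    have hPA : (1:ℝ) ≤ P eA (3 * (n / 3)) := PA_mul3 _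
    have := mul_le_conv numC_nonneg (P_nonneg eA) hr
    nlinarith
  have hconv2 : 0 < conv (conv numC (P eA)) (P eB) n := by
    have h := mul_le_conv (conv_nonneg numC_nonneg (P_nonneg eA)) (P_nonneg eB)
      (by omega : n + 0 = n)
    rw [P_zero, mul_one] at h
    linarith
  have h := mul_le_conv (conv_nonneg (conv_nonneg numC_nonneg (P_nonneg eA))
    (P_nonneg eB)) (P_nonneg eC) (by omega : n + 0 = n)
  rw [P_zero, mul_one] at h
  unfold cFinal
  linarith

end CoefAux

/-- Every coefficient of the power series expansion of
`(φ(q)² + φ(q³)²)/J_{3,12}` is strictly positive. -/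
theorem coeffs_pos :
    ∃ c : ℕ → ℝ, (∀ n, 0 < c n) ∧ ∀ q : ℝ, |q| < 1 →
      (phiR q ^ 2 + phiR (q ^ 3) ^ 2) /
        (qPochR (q ^ 3) (q ^ 12) * qPochR (q ^ 9) (q ^ 12) * qPochR (q ^ 12) (q ^ 12)) =
      ∑' n : ℕ, c n * q ^ n := by
  refine ⟨CoefAux.cFinal, CoefAux.cFinal_pos, ?_⟩
  intro q hq
  obtain ⟨hA0, hA⟩ := CoefAux.Rep_P CoefAux.heA hq
  obtain ⟨hB0, hB⟩ := CoefAux.Rep_P CoefAux.heB hq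
  obtain ⟨hC0, hC⟩ := CoefAux.Rep_P CoefAux.heC hq
  have hqpA : qPochR (q ^ 3) (q ^ 12) = ∏' i, (1 - q ^ CoefAux.eA i) := by
    unfold qPochR
    exact tprod_congr fun i => by rw [← pow_mul, ← pow_add]; rfl
  have hqpB : qPochR (q ^ 9) (q ^ 12) = ∏' i, (1 - q ^ CoefAux.eB i) := by
    unfold qPochR
    exact tprod_congr fun i => by rw [← pow_mul, ← pow_add]; rfl
  have hqpC : qPochR (q ^ 12) (q ^ 12) = ∏' i, (1 - q ^ CoefAux.eC i) := by
    unfold qPochR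
    exact tprod_congr fun i => by rw [← pow_mul, ← pow_add]; rfl
  have hnum := CoefAux.Rep.num hq
  have hfin := ((hnum.mul hA).mul hB).mul hC
  rw [hqpA, hqpB, hqpC]
  simp only [CoefAux.cFinal]
  rw [hfin.2]
  rw [div_eq_mul_inv, mul_inv, mul_inv]
  ring
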